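/- Let 0 < β₁₁₁ < 1, 0 < β₂₁ < 1 with λ₁ := β₁₁₁/β₂₁ < 1, and let (β_{11j})_{j≥1} satisfy 0 ≤ β_{11j} ≤ β₁₁₁ for all j. Let g_{1,1}, …, g_{1,t} ∈ ℝⁿ, define m_{1,t} = β_{11t} m_{1,t−1} + (1−β_{11t}) g_{1,t} with m_{1,0} = 0, and let (v̂_{1,s})_s ⊂ ℝⁿ be coordinatewise nondecreasing with v̂_{1,s} ≥ (1−β₂₁) Σ_{j=1}^s β₂₁^{s−j} g_{1,j} ⊙ g_{1,j} coordinatewise for each s. Then ‖(1/√v̂_{1,t}) ⊙ m_{1,t−1}‖² ≤ n / ( (1−β₁₁₁)(1−β₂₁)(1−λ₁) ), where coordinates with v̂_{1,t} = 0 are interpreted as 0. -/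

import Mathlib

open Finset

/-- Lemma 5, bound (1) of the paper.  With time-varying decay
parameters `0 ≤ β_{11j} ≤ β₁₁₁`, the first-moment recursion
`m_{1,t} = β_{11t} m_{1,t−1} + (1−β_{11t}) g_{1,t}` (started at `0`), and a
coordinatewise nondecreasing family `v̂_{1,s}` dominating the exponential moving
average `(1−β₂₁) Σ_{j=1}^s β₂₁^{s−j} g_{1,j} ⊙ g_{1,j}` for every `s`, if
`λ₁ = β₁₁₁/β₂₁ < 1` then
`‖(1/√v̂_{1,t}) ⊙ m_{1,t−1}‖² ≤ n/((1−β₁₁₁)(1−β₂₁)(1−λ₁))`.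
(Coordinates with `v̂_{1,t} = 0` contribute `0`; Lean's division by zero is zero.) -/
theorem dnnAdam_previous_moment_normalized_bound
    (n t : ℕ)
    (β₁₁₁ β₂₁ : ℝ) (hβ₁ : 0 < β₁₁₁) (hβ₁' : β₁₁₁ < 1) (hβ₂ : 0 < β₂₁) (hβ₂' : β₂₁ < 1)
    (hlam : β₁₁₁ / β₂₁ < 1)
    (β : ℕ → ℝ) (hβ0 : ∀ j, 0 ≤ β j) (hβub : ∀ j, β j ≤ β₁₁₁)
    (g : ℕ → Fin n → ℝ)
    (m : ℕ → Fin n → ℝ) (hm0 : ∀ i, m 0 i = 0)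
    (hm : ∀ j i, m (j + 1) i = β (j + 1) * m j i + (1 - β (j + 1)) * g (j + 1) i)
    (vhat : ℕ → Fin n → ℝ)
    (hmono : ∀ s i, vhat s i ≤ vhat (s + 1) i)
    (hvhat : ∀ s i, (1 - β₂₁) * ∑ j ∈ Finset.Icc 1 s, β₂₁ ^ (s - j) * (g j i) ^ 2 ≤ vhat s i) :
    ∑ i, (m (t - 1) i / Real.sqrt (vhat t i)) ^ 2
      ≤ (n : ℝ) / ((1 - β₁₁₁) * (1 - β₂₁) * (1 - β₁₁₁ / β₂₁)) := by
  have hb1 : 0 < 1 - β₁₁₁ := by linarith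
  have hb2 : 0 < 1 - β₂₁ := by linarith
  have hlam0 : 0 ≤ β₁₁₁ / β₂₁ := by positivity
  have hl1 : 0 < 1 - β₁₁₁ / β₂₁ := by linarith
  set lam := β₁₁₁ / β₂₁ with hlamdef
  set C : ℝ := 1 / (1 - β₁₁₁) with hC
  have hC1 : (1:ℝ) ≤ C := by
    rw [hC, le_div_iff₀ hb1]; linarith
  have hC0 : 0 < C := by positivity
  have hD : 0 < (1 - β₁₁₁) * (1 - β₂₁) * (1 - lam) := mul_pos (mul_pos hb1 hb2) hl1
  have hRHS0 : 0 ≤ 1 / ((1 - β₁₁₁) * (1 - β₂₁) * (1 - lam)) := le_of_lt (div_pos one_pos hD)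
  -- geometric sum bound
  have hgeom : ∀ s : ℕ, ∑ j ∈ Finset.Icc 1 s, lam ^ (s - j) ≤ 1 / (1 - lam) := by
    intro s
    induction s with
    | zero =>
      simp only [Finset.Icc_eq_empty_of_lt Nat.zero_lt_one, Finset.sum_empty]
      exact le_of_lt (div_pos one_pos hl1)
    | succ s ih =>
      have h1 : ∑ j ∈ Finset.Icc 1 (s+1), lam ^ (s + 1 - j)
          = lam * ∑ j ∈ Finset.Icc 1 s, lam ^ (s - j) + 1 := by
        rw [Finset.sum_Icc_succ_top (Nat.one_le_iff_ne_zero.mpr (Nat.succ_ne_zero s)),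
          Finset.mul_sum]
        simp only [Nat.sub_self, pow_zero]
        congr 1
        apply Finset.sum_congr rfl
        intro j hj
        have : j ≤ s := (Finset.mem_Icc.mp hj).2
        rw [show s + 1 - j = (s - j) + 1 by omega, pow_succ]
        ring
      rw [h1]
      have h2 : lam * ∑ j ∈ Finset.Icc 1 s, lam ^ (s - j) ≤ lam * (1 / (1 - lam)) :=
        mul_le_mul_of_nonneg_left ih hlam0
      have h3 : lam * (1 / (1 - lam)) + 1 = 1 / (1 - lam) := by
        field_simp
        ring
      linarith
  -- moment bound
  have L1 : ∀ (s : ℕ) (i : Fin n),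
      (m s i) ^ 2 ≤ C * ∑ j ∈ Finset.Icc 1 s, β₁₁₁ ^ (s - j) * (g j i) ^ 2 := by
    intro s i
    induction s with
    | zero => simp [hm0]
    | succ s ih =>
      have hβs0 := hβ0 (s + 1)
      have hβs1 := hβub (s + 1)
      have hβle1 : β (s + 1) ≤ 1 := le_trans hβs1 hβ₁'.le
      have hconv : (m (s+1) i) ^ 2
          ≤ β (s+1) * (m s i) ^ 2 + (1 - β (s+1)) * (g (s+1) i) ^ 2 := by
        rw [hm]
        nlinarith [sq_nonneg (m s i - g (s+1) i),
          mul_nonneg hβs0 (sub_nonneg.2 hβle1)]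
      set S := ∑ j ∈ Finset.Icc 1 s, β₁₁₁ ^ (s - j) * (g j i) ^ 2 with hS
      have hS0 : 0 ≤ S :=
        Finset.sum_nonneg fun j _ => mul_nonneg (pow_nonneg hβ₁.le _) (sq_nonneg _)
      have hsum : ∑ j ∈ Finset.Icc 1 (s+1), β₁₁₁ ^ (s + 1 - j) * (g j i) ^ 2
          = β₁₁₁ * S + (g (s+1) i) ^ 2 := by
        rw [hS, Finset.sum_Icc_succ_top (Nat.one_le_iff_ne_zero.mpr (Nat.succ_ne_zero s)),
          Finset.mul_sum]
        simp only [Nat.sub_self, pow_zero, one_mul]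
        congr 1
        apply Finset.sum_congr rfl
        intro j hj
        have : j ≤ s := (Finset.mem_Icc.mp hj).2
        rw [show s + 1 - j = (s - j) + 1 by omega, pow_succ]
        ring
      rw [hsum]
      have h1 : β (s+1) * (m s i) ^ 2 ≤ β₁₁₁ * (C * S) :=
        mul_le_mul hβs1 ih (sq_nonneg _) hβ₁.le
      have h2 : (1 - β (s+1)) * (g (s+1) i) ^ 2 ≤ 1 * (g (s+1) i) ^ 2 :=
        mul_le_mul_of_nonneg_right (by linarith) (sq_nonneg _)
      have h3 : β₁₁₁ * (C * S) + 1 * (g (s+1) i) ^ 2 ≤ C * (β₁₁₁ * S + (g (s+1) i) ^ 2) := by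
        nlinarith [mul_nonneg (sub_nonneg.2 hC1) (sq_nonneg (g (s+1) i))]
      linarith
  -- per-coordinate bound
  have key : ∀ i : Fin n, (m (t - 1) i / Real.sqrt (vhat t i)) ^ 2
      ≤ 1 / ((1 - β₁₁₁) * (1 - β₂₁) * (1 - lam)) := by
    intro i
    have hv0 : 0 ≤ vhat t i := by
      refine le_trans ?_ (hvhat t i)
      have : 0 ≤ ∑ j ∈ Finset.Icc 1 t, β₂₁ ^ (t - j) * (g j i) ^ 2 :=
        Finset.sum_nonneg fun j _ => mul_nonneg (pow_nonneg hβ₂.le _) (sq_nonneg _)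
      positivity
    rcases eq_or_lt_of_le hv0 with hv | hv
    · rw [← hv, Real.sqrt_zero, div_zero]
      simp only [ne_eq, OfNat.ofNat_ne_zero, not_false_eq_true, zero_pow]
      exact hRHS0
    · have hsq : (m (t - 1) i / Real.sqrt (vhat t i)) ^ 2 = (m (t - 1) i) ^ 2 / vhat t i := by
        rw [div_pow, Real.sq_sqrt hv0]
      rw [hsq]
      rcases t with _ | s
      · simp only [Nat.zero_sub, hm0]
        rw [show ((0:ℝ)^2 / vhat 0 i) = 0 by norm_num]
        exact hRHS0
      · -- t = s + 1, t - 1 = s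
        simp only [Nat.succ_sub_one]
        rw [div_le_iff₀ hv]
        set v := vhat (s+1) i with hvdef
        -- termwise bound
        have hterm : ∀ j ∈ Finset.Icc 1 s,
            β₁₁₁ ^ (s - j) * (g j i) ^ 2 ≤ lam ^ (s - j) * (v / (1 - β₂₁)) := by
          intro j hj
          have hsingle : β₂₁ ^ (s - j) * (g j i) ^ 2
              ≤ ∑ k ∈ Finset.Icc 1 s, β₂₁ ^ (s - k) * (g k i) ^ 2 :=
            Finset.single_le_sum (f := fun k => β₂₁ ^ (s - k) * (g k i) ^ 2)
              (fun k _ => mul_nonneg (pow_nonneg hβ₂.le _) (sq_nonneg _)) hj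
          have hgb : (1 - β₂₁) * (β₂₁ ^ (s - j) * (g j i) ^ 2) ≤ v := by
            refine le_trans ?_ (le_trans (hvhat s i) (hmono s i))
            exact mul_le_mul_of_nonneg_left hsingle hb2.le
          have hβp : 0 < β₂₁ ^ (s - j) := pow_pos hβ₂ _
          have hg2 : (g j i) ^ 2 ≤ v / ((1 - β₂₁) * β₂₁ ^ (s - j)) := by
            rw [le_div_iff₀ (mul_pos hb2 hβp)]
            calc (g j i) ^ 2 * ((1 - β₂₁) * β₂₁ ^ (s - j))
                = (1 - β₂₁) * (β₂₁ ^ (s - j) * (g j i) ^ 2) := by ring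
              _ ≤ v := hgb
          have heq : lam ^ (s - j) * (v / (1 - β₂₁))
              = β₁₁₁ ^ (s - j) * (v / ((1 - β₂₁) * β₂₁ ^ (s - j))) := by
            rw [hlamdef, div_pow]
            simp only [div_eq_mul_inv, one_div, mul_inv]
            ring
          rw [heq]
          exact mul_le_mul_of_nonneg_left hg2 (pow_nonneg hβ₁.le _)
        have hsum2 : ∑ j ∈ Finset.Icc 1 s, β₁₁₁ ^ (s - j) * (g j i) ^ 2
            ≤ (v / (1 - β₂₁)) * (1 / (1 - lam)) := by
          calc ∑ j ∈ Finset.Icc 1 s, β₁₁₁ ^ (s - j) * (g j i) ^ 2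
              ≤ ∑ j ∈ Finset.Icc 1 s, lam ^ (s - j) * (v / (1 - β₂₁)) :=
                Finset.sum_le_sum hterm
            _ = (∑ j ∈ Finset.Icc 1 s, lam ^ (s - j)) * (v / (1 - β₂₁)) := by
                rw [Finset.sum_mul]
            _ ≤ (1 / (1 - lam)) * (v / (1 - β₂₁)) := by
                apply mul_le_mul_of_nonneg_right (hgeom s)
                positivity
            _ = (v / (1 - β₂₁)) * (1 / (1 - lam)) := by ring
        have := le_trans (L1 s i) (mul_le_mul_of_nonneg_left hsum2 hC0.le)
        calc (m s i) ^ 2 ≤ C * ((v / (1 - β₂₁)) * (1 / (1 - lam))) := this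
          _ = 1 / ((1 - β₁₁₁) * (1 - β₂₁) * (1 - lam)) * v := by
              rw [hC]
              simp only [div_eq_mul_inv, one_div, mul_inv]
              ring
  calc ∑ i, (m (t - 1) i / Real.sqrt (vhat t i)) ^ 2
      ≤ ∑ _i : Fin n, 1 / ((1 - β₁₁₁) * (1 - β₂₁) * (1 - lam)) :=
        Finset.sum_le_sum fun i _ => key i
    _ = (n : ℝ) / ((1 - β₁₁₁) * (1 - β₂₁) * (1 - lam)) := by
        rw [Finset.sum_const, Finset.card_univ, Fintype.card_fin, nsmul_eq_mul, mul_one_div]
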